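/- Let R and S be finite sets of positive integers satisfying the tableau condition. Then the greedy matching of S into R is well defined: for every i ∈ S, when i is processed the set { j ∈ R : j < i and j ≠ f(i′) for every i′ ∈ S with i′ < i } is nonempty. Consequently the greedy matching yields an injective function f : S → R with f(i) < i for every i ∈ S. -/

import Mathlib

open scoped Classical

/-- The `j`-th smallest element (0-indexed) of a finite set of naturals (default `0`). -/
noncomputable def nthSmallest (s : Finset ℕ) (j : ℕ) : ℕ := (s.sort (· ≤ ·)).getD j 0

/-- `(R, S)` satisfies the tableau condition: `|S| ≤ |R|` and for every `j ≤ |S|`, the `j`-th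
smallest element of `S` is greater than the `j`-th smallest element of `R`. -/
def TableauCond (R S : Finset ℕ) : Prop :=
  S.card ≤ R.card ∧ ∀ j < S.card, nthSmallest R j < nthSmallest S j

/-- The greedy matching of `S` into `R`: processing the elements `i` of `S` in increasing
order, `greedy R S i = max { j ∈ R : j < i and j ≠ greedy R S i' for every i' ∈ S with i' < i }`
(with value `0` when this set is empty or `i ∉ S`). -/
noncomputable def greedy (R S : Finset ℕ) (i : ℕ) : ℕ :=
  Nat.strongRecOn i fun i ih =>
    ((R.filter fun j => j < i ∧ ∀ i' (_ : i' ∈ S) (h : i' < i), j ≠ ih i' h).max).unbotD 0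

lemma greedy_eq (R S : Finset ℕ) (i : ℕ) :
    greedy R S i
      = ((R.filter fun j => j < i ∧ ∀ i' ∈ S, i' < i → j ≠ greedy R S i').max).unbotD 0 := by
  conv_lhs => rw [greedy]
  rw [Nat.strongRecOn_eq]
  rfl

lemma mem_take_iff' {l : List ℕ} {m a : ℕ} :
    a ∈ l.take m ↔ ∃ n, ∃ h : n < l.length, n < m ∧ l[n] = a := by
  constructor
  · intro ha
    obtain ⟨n, hn, he⟩ := List.mem_iff_getElem.mp ha
    have hn' := hn
    rw [List.length_take] at hn'
    have hn1 : n < m := lt_of_lt_of_le hn' (min_le_left _ _)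
    have hn2 : n < l.length := lt_of_lt_of_le hn' (min_le_right _ _)
    refine ⟨n, hn2, hn1, ?_⟩
    have : l[n]? = some a := by
      rw [← List.getElem?_take_of_lt hn1, List.getElem?_eq_getElem hn, he]
    obtain ⟨_, h2⟩ := List.getElem?_eq_some_iff.mp this
    exact h2
  · rintro ⟨n, h, hnm, rfl⟩
    apply List.mem_of_getElem? (i := n)
    rw [List.getElem?_take_of_lt hnm, List.getElem?_eq_getElem h]

/-- Counting lemma A: if the `k`-th smallest element of `R` is `< x` then `R` has at least
`k+1` elements below `x`. -/
lemma card_filter_lt_ge (R : Finset ℕ) (k x : ℕ) (hk : k < R.card)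
    (hx : nthSmallest R k < x) : k + 1 ≤ (R.filter (· < x)).card := by
  set l := R.sort (· ≤ ·) with hl
  have hlen : l.length = R.card := R.length_sort _
  have hnd : l.Nodup := R.sort_nodup _
  have hks : k < l.length := by omega
  have hnth : nthSmallest R k = l[k] := by
    unfold nthSmallest
    rw [← hl, List.getD_eq_getElem?_getD, List.getElem?_eq_getElem hks]
    rfl
  have hsub : (l.take (k + 1)).toFinset ⊆ R.filter (· < x) := by
    intro a ha
    rw [List.mem_toFinset, mem_take_iff'] at ha
    obtain ⟨n, hn, hnk, rfl⟩ := ha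
    rw [Finset.mem_filter]
    constructor
    · exact (Finset.mem_sort (α := ℕ) (· ≤ ·)).mp (List.getElem_mem hn)
    · have hle : l[n] ≤ l[k] := by
        rcases eq_or_lt_of_le (Nat.lt_succ_iff.mp hnk) with h | h
        · simp [h]
        · exact le_of_lt ((R.sortedLT_sort.pairwise).rel_get_of_lt (a := ⟨n, hn⟩) (b := ⟨k, hks⟩) h)
      calc l[n] ≤ l[k] := hle
        _ < x := hnth ▸ hx
  have hcard : (l.take (k + 1)).toFinset.card = k + 1 := by
    rw [List.toFinset_card_of_nodup (hnd.sublist (List.take_sublist _ _))]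
    rw [List.length_take]
    omega
  calc k + 1 = (l.take (k + 1)).toFinset.card := hcard.symm
    _ ≤ (R.filter (· < x)).card := Finset.card_le_card hsub

/-- Counting lemma B: if `i ∈ S` then `i` is the `k`-th smallest element of `S`, where
`k` is the number of elements of `S` below `i`. -/
lemma nthSmallest_card_filter (S : Finset ℕ) {i : ℕ} (hi : i ∈ S) :
    nthSmallest S ((S.filter (· < i)).card) = i := by
  set l := S.sort (· ≤ ·) with hl
  have hlen : l.length = S.card := S.length_sort _
  have hnd : l.Nodup := S.sort_nodup _
  have hsorted : l.Pairwise (· < ·) := S.sortedLT_sort.pairwise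
  have him : i ∈ l := (Finset.mem_sort (α := ℕ) (· ≤ ·)).mpr hi
  obtain ⟨m, hm, hmi⟩ := List.mem_iff_getElem.mp him
  have hset : S.filter (· < i) = (l.take m).toFinset := by
    ext a
    rw [List.mem_toFinset, mem_take_iff', Finset.mem_filter]
    constructor
    · rintro ⟨haS, hai⟩
      have hal : a ∈ l := (Finset.mem_sort (α := ℕ) (· ≤ ·)).mpr haS
      obtain ⟨n, hn, rfl⟩ := List.mem_iff_getElem.mp hal
      refine ⟨n, hn, ?_, rfl⟩
      by_contra hmn
      push_neg at hmn
      rcases eq_or_lt_of_le hmn with hh | hh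
      · subst hh; omega
      · have := hsorted.rel_get_of_lt (a := ⟨m, hm⟩) (b := ⟨n, hn⟩) hh
        simp only [List.get_eq_getElem] at this
        omega
    · rintro ⟨n, hn, hnm, rfl⟩
      have hlt : l[n] < l[m] := by
        have := hsorted.rel_get_of_lt (a := ⟨n, hn⟩) (b := ⟨m, hm⟩) hnm
        simpa using this
      exact ⟨(Finset.mem_sort (α := ℕ) (· ≤ ·)).mp (List.getElem_mem hn), hmi ▸ hlt⟩
  have hcard : (S.filter (· < i)).card = m := by
    rw [hset, List.toFinset_card_of_nodup (hnd.sublist (List.take_sublist _ _)),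
      List.length_take]
    omega
  rw [hcard]
  unfold nthSmallest
  rw [← hl, List.getD_eq_getElem?_getD, List.getElem?_eq_getElem hm, hmi]
  rfl

/-- The greedy matching of `S` into `R` is well defined: for every `i ∈ S` the set of
available partners is nonempty, and the resulting function is an injective map `S → R`
with `greedy R S i < i` for every `i ∈ S`. -/
theorem greedy_matching_well_defined (R S : Finset ℕ)
    (hRpos : ∀ x ∈ R, 0 < x) (hSpos : ∀ x ∈ S, 0 < x)
    (h : TableauCond R S) :
    (∀ i ∈ S, (R.filter fun j => j < i ∧ ∀ i' ∈ S, i' < i → j ≠ greedy R S i').Nonempty) ∧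
    (∀ i ∈ S, greedy R S i ∈ R) ∧
    (∀ i ∈ S, greedy R S i < i) ∧
    (∀ i ∈ S, ∀ i' ∈ S, greedy R S i = greedy R S i' → i = i') := by
  obtain ⟨hcard, htab⟩ := h
  -- the available set
  set A : ℕ → Finset ℕ :=
    fun i => R.filter fun j => j < i ∧ ∀ i' ∈ S, i' < i → j ≠ greedy R S i' with hA
  have hmemA : ∀ i, (A i).Nonempty → greedy R S i ∈ A i := by
    intro i hne
    obtain ⟨b, hb⟩ := Finset.max_of_nonempty hne
    have : greedy R S i = b := by
      rw [greedy_eq]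
      have hb' : (R.filter fun j => j < i ∧ ∀ i' ∈ S, i' < i → j ≠ greedy R S i').max
          = (b : WithBot ℕ) := hb
      rw [hb']
      rfl
    rw [this]
    exact Finset.mem_of_max hb
  -- main claim by strong induction
  have key : ∀ i ∈ S, (A i).Nonempty := by
    intro i
    induction i using Nat.strongRecOn with
    | _ i ih =>
      intro hi
      set k := (S.filter (· < i)).card with hk
      have hkS : k < S.card := by
        apply Finset.card_lt_card
        constructor
        · exact Finset.filter_subset _ _
        · intro hsub
          have := Finset.mem_filter.mp (hsub hi)
          omega
      have hnthS : nthSmallest S k = i := nthSmallest_card_filter S hi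
      have hnthR : nthSmallest R k < i := hnthS ▸ htab k hkS
      have hRcount : k + 1 ≤ (R.filter (· < i)).card :=
        card_filter_lt_ge R k i (lt_of_lt_of_le hkS hcard) hnthR
      -- the set of already-used values
      set T := (S.filter (· < i)).image (greedy R S) with hT
      have hTsub : T ⊆ R.filter (· < i) := by
        intro j hj
        obtain ⟨i', hi', rfl⟩ := Finset.mem_image.mp hj
        rw [Finset.mem_filter] at hi'
        have hmem := hmemA i' (ih i' hi'.2 hi'.1)
        rw [hA, Finset.mem_filter] at hmem
        exact Finset.mem_filter.mpr ⟨hmem.1, lt_trans hmem.2.1 hi'.2⟩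
      have hTcard : T.card ≤ k := by
        rw [hT, hk]
        exact Finset.card_image_le
      have hlt : T.card < (R.filter (· < i)).card := by omega
      have hns : ¬ (R.filter (· < i) ⊆ T) := fun hs =>
        absurd (Finset.card_le_card hs) (not_le.mpr hlt)
      obtain ⟨j, hjR, hjT⟩ := Finset.not_subset.mp hns
      rw [Finset.mem_filter] at hjR
      refine ⟨j, ?_⟩
      rw [hA, Finset.mem_filter]
      refine ⟨hjR.1, hjR.2, ?_⟩
      intro i' hi' hlt' heq
      exact hjT (Finset.mem_image.mpr ⟨i', Finset.mem_filter.mpr ⟨hi', hlt'⟩, heq ▸ rfl⟩)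
  have hprop : ∀ i ∈ S, greedy R S i ∈ R ∧ greedy R S i < i ∧
      ∀ i' ∈ S, i' < i → greedy R S i ≠ greedy R S i' := by
    intro i hi
    have := hmemA i (key i hi)
    rw [hA, Finset.mem_filter] at this
    exact ⟨this.1, this.2.1, this.2.2⟩
  refine ⟨key, fun i hi => (hprop i hi).1, fun i hi => (hprop i hi).2.1, ?_⟩
  intro i hi i' hi' heq
  by_contra hne
  rcases lt_or_gt_of_ne hne with hlt | hlt
  · exact (hprop i' hi').2.2 i hi hlt heq.symm
  · exact (hprop i hi).2.2 i' hi' hlt heq
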